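/- Let m be an integer with 2 ≤ m ≤ d−1 and define p(m) = max( 2(m+1)/m, max_{1 ≤ k ≤ m} min( 2(2d−k−1)/(2d−k−3), 2k/(k−1) ) ). Then min_{2 ≤ m ≤ d−1} p(m) = p_s(d), where p_s(d) = 2 + 12/(4d−6−k) for d ≡ k (mod 3), k ∈ {0,1,2}. -/
import Mathlib

noncomputable section

def pS (d : ℕ) : ℝ :=
  2 + 12 / (4 * (d : ℝ) - 6 - ((d % 3 : ℕ) : ℝ))

def pexp (d m : ℕ) : ℝ :=
  max (2 * ((m : ℝ) + 1) / (m : ℝ))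
    (sSup {x : ℝ | ∃ k : ℕ, 1 ≤ k ∧ k ≤ m ∧
      x = if k = 1 then 2 * (2 * (d : ℝ) - (k : ℝ) - 1) / (2 * (d : ℝ) - (k : ℝ) - 3)
          else min (2 * (2 * (d : ℝ) - (k : ℝ) - 1) / (2 * (d : ℝ) - (k : ℝ) - 3))
                   (2 * (k : ℝ) / ((k : ℝ) - 1))})

namespace Stmt10Aux

lemma r_le (d : ℕ) : ((d % 3 : ℕ) : ℝ) ≤ 2 := by
  have : d % 3 ≤ 2 := by omega
  exact_mod_cast this

lemma hD_pos (d : ℕ) (hd : 9 ≤ d) : (0:ℝ) < 4 * (d:ℝ) - 6 - ((d % 3 : ℕ) : ℝ) := by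
  have h1 := r_le d
  have h2 : (9:ℝ) ≤ (d:ℝ) := by exact_mod_cast hd
  linarith

lemma pS_eq (d : ℕ) (hd : 9 ≤ d) :
    pS d = (2 * (4*(d:ℝ)-6-((d % 3 : ℕ):ℝ)) + 12) / (4*(d:ℝ)-6-((d % 3 : ℕ):ℝ)) := by
  have h := hD_pos d hd
  rw [pS]
  field_simp

lemma f_le (d k m : ℕ) (hd : 9 ≤ d) (h1 : 1 ≤ k) (h2 : k ≤ m) (hm : m ≤ d - 1) :
    (if k = 1 then 2 * (2 * (d : ℝ) - (k : ℝ) - 1) / (2 * (d : ℝ) - (k : ℝ) - 3)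
     else min (2 * (2 * (d : ℝ) - (k : ℝ) - 1) / (2 * (d : ℝ) - (k : ℝ) - 3))
              (2 * (k : ℝ) / ((k : ℝ) - 1))) ≤ pS d := by
  have hD := hD_pos d hd
  have hr := r_le d
  have hd' : (9:ℝ) ≤ (d:ℝ) := by exact_mod_cast hd
  have hkd : k + 1 ≤ d := by omega
  have hkd' : (k:ℝ) + 1 ≤ (d:ℝ) := by exact_mod_cast hkd
  have hk' : (1:ℝ) ≤ (k:ℝ) := by exact_mod_cast h1
  have hB : (0:ℝ) < 2 * (d:ℝ) - (k:ℝ) - 3 := by linarith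
  rw [pS_eq d hd]
  by_cases hk1 : k = 1
  · subst hk1
    rw [if_pos rfl, div_le_div_iff₀ hB hD]
    push_cast
    nlinarith [hr, hd']
  · rw [if_neg hk1]
    have hk2 : 2 ≤ k := by omega
    have hk2' : (2:ℝ) ≤ (k:ℝ) := by exact_mod_cast hk2
    by_cases hcase : 3 * k + 3 ≤ 2 * d + d % 3
    · refine le_trans (min_le_left _ _) ?_
      rw [div_le_div_iff₀ hB hD]
      have hc : 3 * (k:ℝ) + 3 ≤ 2 * (d:ℝ) + ((d % 3 : ℕ):ℝ) := by exact_mod_cast hcase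
      nlinarith [hc]
    · refine le_trans (min_le_right _ _) ?_
      have hc : 4 * d ≤ 6 * k + d % 3 := by omega
      have hc' : 4 * (d:ℝ) ≤ 6 * (k:ℝ) + ((d % 3 : ℕ):ℝ) := by exact_mod_cast hc
      have hk1' : (0:ℝ) < (k:ℝ) - 1 := by linarith
      rw [div_le_div_iff₀ hk1' hD]
      nlinarith [hc']

lemma f_k0 (d : ℕ) (hd : 9 ≤ d) :
    (if (2*d-1)/3 = 1 then
        2 * (2 * (d : ℝ) - (((2*d-1)/3 : ℕ) : ℝ) - 1) / (2 * (d : ℝ) - (((2*d-1)/3 : ℕ) : ℝ) - 3)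
     else min (2 * (2 * (d : ℝ) - (((2*d-1)/3 : ℕ) : ℝ) - 1) / (2 * (d : ℝ) - (((2*d-1)/3 : ℕ) : ℝ) - 3))
              (2 * (((2*d-1)/3 : ℕ) : ℝ) / ((((2*d-1)/3 : ℕ) : ℝ) - 1))) = pS d := by
  set k0 : ℕ := (2*d-1)/3 with hk0def
  have hk0ne : k0 ≠ 1 := by omega
  have h3k0 : 3 * k0 + 3 = 2 * d + d % 3 := by omega
  have h3k0' : 3 * (k0:ℝ) + 3 = 2 * (d:ℝ) + ((d % 3 : ℕ):ℝ) := by exact_mod_cast h3k0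
  have hD := hD_pos d hd
  have hr := r_le d
  have hd' : (9:ℝ) ≤ (d:ℝ) := by exact_mod_cast hd
  have hk05 : 5 ≤ k0 := by omega
  have hk05' : (5:ℝ) ≤ (k0:ℝ) := by exact_mod_cast hk05
  have hB : (0:ℝ) < 2 * (d:ℝ) - (k0:ℝ) - 3 := by linarith
  rw [if_neg hk0ne]
  have hg : 2 * (2 * (d : ℝ) - (k0 : ℝ) - 1) / (2 * (d : ℝ) - (k0 : ℝ) - 3) = pS d := by
    rw [pS_eq d hd, div_eq_div_iff hB.ne' hD.ne']
    linear_combination (4:ℝ) * h3k0'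
  have hh : pS d ≤ 2 * (k0:ℝ) / ((k0:ℝ) - 1) := by
    rw [pS_eq d hd]
    have hk1' : (0:ℝ) < (k0:ℝ) - 1 := by linarith
    rw [div_le_div_iff₀ hD hk1']
    nlinarith [h3k0', hr]
  rw [min_eq_left (by rw [hg]; exact hh), hg]



end Stmt10Aux

/-- `min_{2 ≤ m ≤ d-1} p(m) = p_s(d)` for `d ≥ 9`. -/
theorem stmt10 (d : ℕ) (hd : 9 ≤ d) :
    IsLeast ((fun m : ℕ => pexp d m) '' {m : ℕ | 2 ≤ m ∧ m ≤ d - 1}) (pS d) := by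
  have hD := Stmt10Aux.hD_pos d hd
  have hr := Stmt10Aux.r_le d
  have hd' : (9:ℝ) ≤ (d:ℝ) := by exact_mod_cast hd
  set k0 : ℕ := (2*d-1)/3 with hk0def
  have h3k0 : 3 * k0 + 3 = 2 * d + d % 3 := by omega
  have h3k0' : 3 * (k0:ℝ) + 3 = 2 * (d:ℝ) + ((d % 3 : ℕ):ℝ) := by exact_mod_cast h3k0
  have hk0d : k0 ≤ d - 1 := by omega
  have hk05 : 5 ≤ k0 := by omega
  have hk05' : (5:ℝ) ≤ (k0:ℝ) := by exact_mod_cast hk05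
  constructor
  · refine ⟨k0, ⟨by omega, hk0d⟩, ?_⟩
    show pexp d k0 = pS d
    rw [pexp]
    have hsup : sSup {x : ℝ | ∃ k : ℕ, 1 ≤ k ∧ k ≤ k0 ∧
        x = if k = 1 then 2 * (2 * (d : ℝ) - (k : ℝ) - 1) / (2 * (d : ℝ) - (k : ℝ) - 3)
            else min (2 * (2 * (d : ℝ) - (k : ℝ) - 1) / (2 * (d : ℝ) - (k : ℝ) - 3))
                     (2 * (k : ℝ) / ((k : ℝ) - 1))} = pS d := by
      refine IsGreatest.csSup_eq ⟨⟨k0, by omega, le_refl _, (Stmt10Aux.f_k0 d hd).symm⟩, ?_⟩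
      rintro x ⟨k, h1, h2, rfl⟩
      exact Stmt10Aux.f_le d k k0 hd h1 h2 hk0d
    rw [hsup]
    refine max_eq_right ?_
    rw [Stmt10Aux.pS_eq d hd]
    have hk0pos : (0:ℝ) < (k0:ℝ) := by linarith
    rw [div_le_div_iff₀ hk0pos hD]
    nlinarith [h3k0', hr]
  · rintro x ⟨m, ⟨hm2, hmd⟩, rfl⟩
    show pS d ≤ pexp d m
    rw [pexp]
    have hm2' : (2:ℝ) ≤ (m:ℝ) := by exact_mod_cast hm2
    by_cases hcase : 6*m + d%3 + 6 ≤ 4*d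
    · refine le_trans ?_ (le_max_left _ _)
      have hc : 6*(m:ℝ) + ((d % 3 : ℕ):ℝ) + 6 ≤ 4*(d:ℝ) := by exact_mod_cast hcase
      rw [Stmt10Aux.pS_eq d hd]
      have hmpos : (0:ℝ) < (m:ℝ) := by linarith
      rw [div_le_div_iff₀ hD hmpos]
      nlinarith [hc]
    · refine le_trans ?_ (le_max_right _ _)
      have hk0le : k0 ≤ m := by omega
      refine le_csSup ⟨pS d, ?_⟩ ⟨k0, by omega, hk0le, (Stmt10Aux.f_k0 d hd).symm⟩
      rintro y ⟨k, h1, h2, rfl⟩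
      exact Stmt10Aux.f_le d k m hd h1 h2 hmd
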